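/- Let A be a skew brace, and for a, b ∈ A set λ_a(b) = ⊖a ⊕ (a⊙b) and a*b = λ_a(b) ⊖ b. Then for all x, a, b ∈ A one has λ_b(x*a) = (b ⊙ x ⊙ b⁻¹) * λ_b(a), where b⁻¹ is the inverse of b with respect to ⊙. -/

import Mathlib

/-- The lambda map of a skew brace: `λ_a b = ⊖a ⊕ (a ⊙ b)`. -/
def sbLambda (A : Type*) [AddGroup A] [Group A] (a b : A) : A := -a + a * b

/-- The star operation of a skew brace: `a * b = λ_a(b) ⊖ b`. -/
def sbStar (A : Type*) [AddGroup A] [Group A] (a b : A) : A := sbLambda A a b + -b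

/-- In a skew brace, `λ_b(x * a) = (b ⊙ x ⊙ b⁻¹) * λ_b(a)` for all `x, a, b`,
where `*` denotes the star operation. -/
theorem skew_brace_lambda_star
    (A : Type*) [AddGroup A] [Group A]
    (hl : ∀ a b c : A, a * (b + c) = a * b + -a + a * c) :
    ∀ x a b : A, sbLambda A b (sbStar A x a) = sbStar A (b * x * b⁻¹) (sbLambda A b a) := by
  have h0 : ∀ a : A, a * (0 : A) = a := by
    intro a
    have h := hl a 0 0
    rw [add_zero] at h
    have h2 : a * 0 + -a = 0 := (right_eq_add.mp h)
    exact add_neg_eq_zero.mp h2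
  have hneg : ∀ a b : A, a * (-b) = a + -(a * b) + a := by
    intro a b
    have h := hl a b (-b)
    rw [add_neg_cancel, h0] at h
    have := (neg_add_cancel_left (a * b + -a) (a * (-b))).symm.trans (by rw [← h])
    rw [neg_add_rev, neg_neg] at this
    exact this
  intro x a b
  simp only [sbLambda, sbStar, hl, hneg, mul_add, mul_neg, mul_assoc,
    mul_inv_cancel_left, inv_mul_cancel_left, mul_inv_cancel, inv_mul_cancel, mul_one, one_mul]
  simp only [neg_add_rev, neg_neg, add_assoc, neg_add_cancel_left, add_neg_cancel_left,
    neg_add_cancel, add_neg_cancel, add_zero, zero_add]
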